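/- Let (x^k)_{k∈ℕ} be a sequence generated by the ASI algorithm with delay bound τ ≥ 0, where the control sequence (i_k) is an almost cyclic control on {1,...,m}. If there is ε > 0 such that ε ≤ λ_k ≤ 1/(2τ + 1 + ε) for all k ∈ ℕ, then (x^k) converges weakly to a common fixed point x* ∈ C = ⋂_{i=1}^m Fix(T_i). -/

import Mathlib

set_option maxHeartbeats 1000000

open Filter Finset

/-- Weak sequential compactness of bounded sequences in a Hilbert space. -/
theorem weak_seq_compact {H : Type*} [NormedAddCommGroup H] [InnerProductSpace ℝ H]
    [CompleteSpace H] (x : ℕ → H) (R : ℝ) (hR : ∀ k, ‖x k‖ ≤ R) :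
    ∃ p : H, ∃ φ : ℕ → ℕ, StrictMono φ ∧
      ∀ w : H, Tendsto (fun k => (inner ℝ (x (φ k)) w : ℝ)) atTop (nhds (inner ℝ p w)) := by
  have hR0 : 0 ≤ R := le_trans (norm_nonneg _) (hR 0)
  -- compactness in the product space
  set F : ℕ → (ℕ → ℝ) := fun k j => (inner ℝ (x k) (x j) : ℝ) with hF
  have hFs : ∀ k, F k ∈ Set.pi (Set.univ : Set ℕ) (fun _ => Set.Icc (-(R*R)) (R*R)) := by
    intro k j _
    have h1 : |(inner ℝ (x k) (x j) : ℝ)| ≤ ‖x k‖ * ‖x j‖ := abs_real_inner_le_norm _ _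
    have h2 : ‖x k‖ * ‖x j‖ ≤ R * R :=
      mul_le_mul (hR k) (hR j) (norm_nonneg _) hR0
    have := abs_le.1 (le_trans h1 h2)
    exact ⟨this.1, this.2⟩
  obtain ⟨g, -, φ, hφ, hconv⟩ :=
    (isCompact_univ_pi (fun _ : ℕ => isCompact_Icc)).tendsto_subseq hFs
  have hconv' : ∀ j, Tendsto (fun k => (inner ℝ (x (φ k)) (x j) : ℝ)) atTop (nhds (g j)) := by
    intro j
    exact (tendsto_pi_nhds.1 hconv) j
  set y : ℕ → H := fun k => x (φ k) with hy
  have hRy : ∀ k, ‖y k‖ ≤ R := fun k => hR _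
  -- the closed span
  set V : Submodule ℝ H := (Submodule.span ℝ (Set.range x)).topologicalClosure with hV
  haveI : CompleteSpace V := (Submodule.isClosed_topologicalClosure _).completeSpace_coe
  have hyV : ∀ k, y k ∈ V :=
    fun k => Submodule.le_topologicalClosure _ (Submodule.subset_span ⟨φ k, rfl⟩)
  -- convergence on the span
  have hspan : ∀ v ∈ Submodule.span ℝ (Set.range x),
      ∃ c : ℝ, Tendsto (fun k => (inner ℝ (y k) v : ℝ)) atTop (nhds c) := by
    intro v hv
    induction hv using Submodule.span_induction with
    | mem v hv => obtain ⟨j, rfl⟩ := hv; exact ⟨g j, hconv' j⟩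
    | zero => exact ⟨0, by simpa using tendsto_const_nhds⟩
    | add a b _ _ iha ihb =>
        obtain ⟨ca, hca⟩ := iha; obtain ⟨cb, hcb⟩ := ihb
        exact ⟨ca + cb, by simpa [inner_add_right] using hca.add hcb⟩
    | smul r a _ iha =>
        obtain ⟨ca, hca⟩ := iha
        exact ⟨r * ca, by simpa [inner_smul_right] using hca.const_mul r⟩
  -- convergence for every w
  have hlim : ∀ w : H, ∃ c : ℝ, Tendsto (fun k => (inner ℝ (y k) w : ℝ)) atTop (nhds c) := by
    intro w
    set w₁ : H := (Submodule.orthogonalProjection V w : H) with hw₁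
    have hsub : w - w₁ ∈ Vᗮ := Submodule.sub_starProjection_mem_orthogonal w
    have heq : ∀ k, (inner ℝ (y k) w : ℝ) = inner ℝ (y k) w₁ := by
      intro k
      have h0 : (inner ℝ (y k) (w - w₁) : ℝ) = 0 :=
        (Submodule.mem_orthogonal V (w - w₁)).1 hsub (y k) (hyV k)
      have := inner_sub_right (𝕜 := ℝ) (y k) w w₁
      linarith [this, h0]
    -- (y k, w₁) is Cauchy
    have hcauchy : CauchySeq (fun k => (inner ℝ (y k) w₁ : ℝ)) := by
      rw [Metric.cauchySeq_iff]
      intro δ hδ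
      have hw₁V : w₁ ∈ closure ((Submodule.span ℝ (Set.range x) : Submodule ℝ H) : Set H) := by
        have h := (Submodule.orthogonalProjection V w).2
        have h2 : w₁ ∈ (V : Set H) := h
        rwa [hV, Submodule.topologicalClosure_coe] at h2
      obtain ⟨v, hvmem, hvclose⟩ : ∃ v ∈ (Submodule.span ℝ (Set.range x) : Submodule ℝ H),
          ‖w₁ - v‖ < δ / (8 * R + 1) := by
        have hpos : 0 < δ / (8 * R + 1) := by positivity
        obtain ⟨v, hv1, hv2⟩ := Metric.mem_closure_iff.1 hw₁V _ hpos
        exact ⟨v, hv1, by rwa [dist_eq_norm] at hv2⟩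
      obtain ⟨c, hc⟩ := hspan v hvmem
      have hc' : CauchySeq (fun k => (inner ℝ (y k) v : ℝ)) := hc.cauchySeq
      rw [Metric.cauchySeq_iff] at hc'
      obtain ⟨K, hK⟩ := hc' (δ / 2) (by positivity)
      refine ⟨K, fun a ha b hb => ?_⟩
      have key : ∀ k, |(inner ℝ (y k) w₁ : ℝ) - inner ℝ (y k) v| ≤ R * ‖w₁ - v‖ := by
        intro k
        have : (inner ℝ (y k) w₁ : ℝ) - inner ℝ (y k) v = inner ℝ (y k) (w₁ - v) :=
          (inner_sub_right _ _ _).symm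
        rw [this]
        exact le_trans (abs_real_inner_le_norm _ _)
          (mul_le_mul_of_nonneg_right (hRy k) (norm_nonneg _))
      have hRbound : R * ‖w₁ - v‖ ≤ δ / 4 := by
        have h2 : R * ‖w₁ - v‖ ≤ R * (δ / (8 * R + 1)) :=
          mul_le_mul_of_nonneg_left hvclose.le hR0
        have h3 : R * (δ / (8 * R + 1)) ≤ δ / 4 := by
          have h8 : (0:ℝ) < 8 * R + 1 := by positivity
          rw [show R * (δ / (8 * R + 1)) = (R * δ) / (8 * R + 1) by ring,
            div_le_div_iff₀ h8 (by norm_num : (0:ℝ) < 4)]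
          nlinarith
        linarith
      have hab := hK a ha b hb
      rw [Real.dist_eq] at hab ⊢
      have ka := key a; have kb := key b
      have : |(inner ℝ (y a) w₁ : ℝ) - inner ℝ (y b) w₁| ≤
          |(inner ℝ (y a) v : ℝ) - inner ℝ (y b) v| + δ / 4 + δ / 4 := by
        have := abs_sub_abs_le_abs_sub ((inner ℝ (y a) w₁ : ℝ)) ((inner ℝ (y b) w₁ : ℝ))
        calc |(inner ℝ (y a) w₁ : ℝ) - inner ℝ (y b) w₁|
            ≤ |(inner ℝ (y a) w₁ : ℝ) - inner ℝ (y a) v| + |(inner ℝ (y a) v : ℝ) - inner ℝ (y b) w₁| :=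
              abs_sub_le _ _ _
          _ ≤ |(inner ℝ (y a) w₁ : ℝ) - inner ℝ (y a) v| + (|(inner ℝ (y a) v : ℝ) - inner ℝ (y b) v|
              + |(inner ℝ (y b) v : ℝ) - inner ℝ (y b) w₁|) := by
              gcongr; exact abs_sub_le _ _ _
          _ = |(inner ℝ (y a) w₁ : ℝ) - inner ℝ (y a) v| + |(inner ℝ (y a) v : ℝ) - inner ℝ (y b) v|
              + |(inner ℝ (y b) v : ℝ) - inner ℝ (y b) w₁| := by ring
          _ ≤ δ / 4 + |(inner ℝ (y a) v : ℝ) - inner ℝ (y b) v| + δ / 4 := by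
              have kb' : |(inner ℝ (y b) v : ℝ) - inner ℝ (y b) w₁| ≤ R * ‖w₁ - v‖ := by
                rw [abs_sub_comm]; exact kb
              gcongr <;> linarith
          _ = |(inner ℝ (y a) v : ℝ) - inner ℝ (y b) v| + δ / 4 + δ / 4 := by ring
      linarith
    obtain ⟨c, hc⟩ := cauchySeq_tendsto_of_complete hcauchy
    exact ⟨c, by simpa [heq] using hc⟩
  -- build the weak limit via Riesz representation
  choose f hf using hlim
  have fadd : ∀ a b : H, f (a + b) = f a + f b := by
    intro a b
    have h1 := (hf a).add (hf b)
    have h2 : Tendsto (fun k => (inner ℝ (y k) (a + b) : ℝ)) atTop (nhds (f a + f b)) := by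
      simpa [inner_add_right] using h1
    exact tendsto_nhds_unique (hf (a + b)) h2
  have fsmul : ∀ (r : ℝ) (a : H), f (r • a) = r * f a := by
    intro r a
    have h2 : Tendsto (fun k => (inner ℝ (y k) (r • a) : ℝ)) atTop (nhds (r * f a)) := by
      simpa [inner_smul_right] using (hf a).const_mul r
    exact tendsto_nhds_unique (hf (r • a)) h2
  have fbound : ∀ a : H, ‖f a‖ ≤ R * ‖a‖ := by
    intro a
    have h1 : ∀ k, |(inner ℝ (y k) a : ℝ)| ≤ R * ‖a‖ := fun k =>
      le_trans (abs_real_inner_le_norm _ _) (mul_le_mul_of_nonneg_right (hRy k) (norm_nonneg _))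
    have h2 : Tendsto (fun k => |(inner ℝ (y k) a : ℝ)|) atTop (nhds |f a|) := (hf a).abs
    simpa using le_of_tendsto h2 (Eventually.of_forall h1)
  set fL : H →L[ℝ] ℝ := LinearMap.mkContinuous
    { toFun := f, map_add' := fadd, map_smul' := fsmul } R fbound with hfL
  refine ⟨(InnerProductSpace.toDual ℝ H).symm fL, φ, hφ, fun w => ?_⟩
  have : (inner ℝ ((InnerProductSpace.toDual ℝ H).symm fL) w : ℝ) = fL w :=
    InnerProductSpace.toDual_symm_apply
  rw [this]
  exact hf w

/-- Demiclosedness principle for nonexpansive maps. -/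
theorem demiclosed {H : Type*} [NormedAddCommGroup H] [InnerProductSpace ℝ H]
    (T : H → H) (hT : ∀ u v, ‖T u - T v‖ ≤ ‖u - v‖)
    (y : ℕ → H) (R : ℝ) (hR : ∀ k, ‖y k‖ ≤ R)
    (hreg : Tendsto (fun k => ‖y k - T (y k)‖) atTop (nhds 0))
    (p : H) (hw : ∀ w : H, Tendsto (fun k => (inner ℝ (y k) w : ℝ)) atTop (nhds (inner ℝ p w))) :
    T p = p := by
  set c : ℕ → ℝ := fun k => ‖y k - T (y k)‖ with hc
  have hc0 : ∀ k, 0 ≤ c k := fun k => norm_nonneg _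
  set R' : ℝ := R + ‖p‖ with hR'
  have hr : ∀ k, ‖y k - p‖ ≤ R' := fun k =>
    le_trans (norm_sub_le _ _) (add_le_add_left (hR k) _)
  have key : ∀ k, ‖p - T p‖ ^ 2 ≤
      2 * c k * R' + c k ^ 2 - 2 * (inner ℝ (y k - p) (p - T p) : ℝ) := by
    intro k
    have h1 : ‖y k - T p‖ ≤ c k + ‖y k - p‖ := by
      calc ‖y k - T p‖ ≤ ‖y k - T (y k)‖ + ‖T (y k) - T p‖ := norm_sub_le_norm_sub_add_norm_sub _ _ _
        _ ≤ c k + ‖y k - p‖ := add_le_add le_rfl (hT _ _)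
    have h2 : ‖y k - T p‖ ^ 2 ≤ (c k + ‖y k - p‖) ^ 2 := by
      have := norm_nonneg (y k - T p)
      nlinarith [h1]
    have h3 : ‖y k - T p‖ ^ 2 =
        ‖y k - p‖ ^ 2 + 2 * (inner ℝ (y k - p) (p - T p) : ℝ) + ‖p - T p‖ ^ 2 := by
      have hd : y k - T p = (y k - p) + (p - T p) := by abel
      rw [hd, ← real_inner_self_eq_norm_sq, ← real_inner_self_eq_norm_sq,
        ← real_inner_self_eq_norm_sq]
      simp only [inner_add_add_self]
      rw [real_inner_comm (p - T p) (y k - p)]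
      ring
    have h4 : (c k + ‖y k - p‖) ^ 2 = c k ^ 2 + 2 * c k * ‖y k - p‖ + ‖y k - p‖ ^ 2 := by ring
    nlinarith [hr k, hc0 k]
  have hinner : Tendsto (fun k => (inner ℝ (y k - p) (p - T p) : ℝ)) atTop (nhds 0) := by
    have h1 : ∀ k, (inner ℝ (y k - p) (p - T p) : ℝ) =
        inner ℝ (y k) (p - T p) - inner ℝ p (p - T p) := fun k => inner_sub_left _ _ _
    have h2 := (hw (p - T p)).sub_const (inner ℝ p (p - T p) : ℝ)
    simp only [sub_self] at h2
    simpa [h1] using h2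
  have hrhs : Tendsto (fun k => 2 * c k * R' + c k ^ 2
      - 2 * (inner ℝ (y k - p) (p - T p) : ℝ)) atTop (nhds 0) := by
    have h1 : Tendsto (fun k => 2 * c k * R') atTop (nhds 0) := by
      have := (hreg.const_mul 2).mul_const R'
      simpa using this
    have h2 : Tendsto (fun k => c k ^ 2) atTop (nhds 0) := by
      have := hreg.mul hreg
      simpa [pow_two] using this
    have h3 := (h1.add h2).sub (hinner.const_mul 2)
    simpa using h3
  have hle : ‖p - T p‖ ^ 2 ≤ 0 := ge_of_tendsto hrhs (Eventually.of_forall key)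
  have : ‖p - T p‖ = 0 := by nlinarith [norm_nonneg (p - T p), sq_nonneg ‖p - T p‖]
  have := norm_eq_zero.1 this
  have : p = T p := by rwa [sub_eq_zero] at this
  exact this.symm

lemma asi_step' {H : Type*} [NormedAddCommGroup H] [InnerProductSpace ℝ H]
    (T : H → H) (hT : ∀ u v, ‖T u - T v‖ ≤ ‖u - v‖) (z : H) (hz : T z = z)
    (xk xh : H) (lam : ℝ) (hl0 : 0 < lam) (Q : ℝ) (hQ : ‖xk - xh‖ ≤ Q) :
    ‖(xk - lam • (xh - T xh)) - z‖ ^ 2 ≤ ‖xk - z‖ ^ 2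
      - lam * ‖xh - T xh‖ ^ 2 + lam ^ 2 * ‖xh - T xh‖ ^ 2
      + 2 * lam * ‖xh - T xh‖ * Q := by
  set v : H := xh - T xh with hv
  set e : ℝ := ‖v‖ with he
  -- firm inequality: 2 ⟪xh - z, v⟫ ≥ ‖v‖²
  have hfirm : e ^ 2 ≤ 2 * (inner ℝ (xh - z) v : ℝ) := by
    have h1 : ‖T xh - z‖ ≤ ‖xh - z‖ := by
      have := hT xh z; rwa [hz] at this
    have h2 : T xh - z = (xh - z) - v := by rw [hv]; abel
    have h3 : ‖(xh - z) - v‖ ^ 2 =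
        ‖xh - z‖ ^ 2 - 2 * (inner ℝ (xh - z) v : ℝ) + ‖v‖ ^ 2 := by
      rw [← real_inner_self_eq_norm_sq, ← real_inner_self_eq_norm_sq,
        ← real_inner_self_eq_norm_sq]
      rw [inner_sub_sub_self]
      rw [real_inner_comm v (xh - z)]
      ring
    have h4 : ‖(xh - z) - v‖ ^ 2 ≤ ‖xh - z‖ ^ 2 := by
      rw [← h2]
      have := norm_nonneg (T xh - z)
      nlinarith [h1]
    nlinarith [h3, h4]
  -- expansion of the update
  have hexp : ‖(xk - lam • v) - z‖ ^ 2 =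
      ‖xk - z‖ ^ 2 - 2 * lam * (inner ℝ (xk - z) v : ℝ) + lam ^ 2 * e ^ 2 := by
    have h2 : (xk - lam • v) - z = (xk - z) - lam • v := by abel
    rw [h2, ← real_inner_self_eq_norm_sq, ← real_inner_self_eq_norm_sq,
      ← real_inner_self_eq_norm_sq, inner_sub_sub_self]
    rw [real_inner_comm (lam • v) (xk - z), inner_smul_left, inner_smul_left, inner_smul_right]
    simp only [RCLike.conj_to_real, conj_trivial]
    rw [real_inner_comm v (xk - z)]
    ring
  -- decompose the inner ℝ product
  have hdec : (inner ℝ (xk - z) v : ℝ) = inner ℝ (xh - z) v + inner ℝ (xk - xh) v := by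
    rw [← inner_add_left]; congr 1; abel
  have hcross : -(Q * e) ≤ (inner ℝ (xk - xh) v : ℝ) := by
    have h1 : |(inner ℝ (xk - xh) v : ℝ)| ≤ ‖xk - xh‖ * e := abs_real_inner_le_norm _ _
    have h2 : ‖xk - xh‖ * e ≤ Q * e := mul_le_mul_of_nonneg_right hQ (norm_nonneg _)
    have := abs_le.1 (le_trans h1 h2)
    linarith [this.1]
  have hfirm' : lam * e ^ 2 ≤ 2 * lam * (inner ℝ (xh - z) v : ℝ) := by nlinarith [hfirm, hl0.le]
  have hcross' : -(2 * lam * (Q * e)) ≤ 2 * lam * (inner ℝ (xk - xh) v : ℝ) := by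
    nlinarith [hcross, hl0.le]
  rw [hexp, hdec]
  nlinarith [hfirm', hcross']

lemma asi_estimates {H : Type*} [NormedAddCommGroup H] [InnerProductSpace ℝ H]
    (m : ℕ) (T : Fin m → H → H)
    (hT : ∀ i, ∀ u v : H, ‖T i u - T i v‖ ≤ ‖u - v‖)
    (x : ℕ → H) (lam : ℕ → ℝ) (idx : ℕ → Fin m) (d : ℕ → ℕ) (τ : ℕ)
    (hlam : ∀ k, 0 < lam k ∧ lam k < 1)
    (hd : ∀ k, d k ≤ min τ (k - 1))
    (hx0 : x 0 = x 1)
    (hup : ∀ k, 1 ≤ k → x (k + 1) =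
      if k ≤ τ then x k
      else x k - lam k • (x (k - d k) - T (idx k) (x (k - d k))))
    (ε : ℝ) (hε : 0 < ε)
    (hlam2 : ∀ k, ε ≤ lam k ∧ lam k ≤ 1 / (2 * (τ : ℝ) + 1 + ε))
    (z₀ : H) (hz₀ : ∀ i, T i z₀ = z₀) :
    (∀ z : H, (∀ i, T i z = z) → ∃ L, Tendsto (fun k => ‖x k - z‖ ^ 2) atTop (nhds L)) ∧
    Tendsto (fun k => ‖x k - x (k - d k)‖) atTop (nhds 0) ∧
    Tendsto (fun k => ‖x (k + 1) - x k‖) atTop (nhds 0) ∧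
    Tendsto (fun k => ‖x (k - d k) - T (idx k) (x (k - d k))‖) atTop (nhds 0) := by
  -- notation
  set e : ℕ → ℝ := fun k => ‖x (k - d k) - T (idx k) (x (k - d k))‖ with he_def
  set u : ℕ → ℝ := fun k => ‖x (k + 1) - x k‖ with hu_def
  set b : ℕ → ℝ := fun k => u k ^ 2 with hb_def
  have he_nonneg : ∀ k, 0 ≤ e k := fun k => norm_nonneg _
  have hu_nonneg : ∀ k, 0 ≤ u k := fun k => norm_nonneg _
  have hb_nonneg : ∀ k, 0 ≤ b k := fun k => sq_nonneg _
  set D : ℝ := 2 * (τ : ℝ) + 1 + ε with hD_def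
  have hDpos : 0 < D := by positivity
  set lb : ℝ := 1 / D with hlb_def
  set δ : ℝ := ε / D with hδ_def
  have hlbpos : 0 < lb := by positivity
  have hδpos : 0 < δ := by positivity
  have hlamlb : ∀ k, lam k ≤ lb := fun k => (hlam2 k).2
  have hcoef : ∀ k, δ + (τ : ℝ) * lb ≤ 1 - ((τ : ℝ) + 1) * lam k := by
    intro k
    have h1 : ((τ : ℝ) + 1) * lam k ≤ ((τ : ℝ) + 1) * lb :=
      mul_le_mul_of_nonneg_left (hlamlb k) (by positivity)
    have h2 : δ + (τ : ℝ) * lb = 1 - ((τ : ℝ) + 1) * lb := by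
      rw [hδ_def, hlb_def]
      field_simp
      ring
    linarith
  -- constancy at the start, update rule
  have hstep0 : ∀ k, k ≤ τ → x (k + 1) = x k := by
    intro k hk
    rcases Nat.eq_zero_or_pos k with rfl | hpos
    · exact hx0.symm
    · rw [hup k hpos, if_pos hk]
  have hupd : ∀ k, τ + 1 ≤ k →
      x (k + 1) = x k - lam k • (x (k - d k) - T (idx k) (x (k - d k))) := by
    intro k hk
    rw [hup k (le_trans (Nat.le_add_left 1 τ) hk), if_neg (by omega)]
  have hu_zero : ∀ k, k ≤ τ → u k = 0 := by
    intro k hk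
    simp only [hu_def, hstep0 k hk, sub_self, norm_zero]
  have hu_eq : ∀ k, τ + 1 ≤ k → u k = lam k * e k := by
    intro k hk
    simp only [hu_def, he_def, hupd k hk]
    rw [show x k - lam k • (x (k - d k) - T (idx k) (x (k - d k))) - x k
        = -(lam k • (x (k - d k) - T (idx k) (x (k - d k)))) by abel]
    rw [norm_neg, norm_smul, Real.norm_eq_abs, abs_of_pos (hlam k).1]
  have hb_eq : ∀ k, τ + 1 ≤ k → b k = lam k ^ 2 * e k ^ 2 := by
    intro k hk
    simp only [hb_def, hu_eq k hk]
    ring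
  -- the delay bound
  have hQ : ∀ k, τ + 1 ≤ k →
      ‖x k - x (k - d k)‖ ≤ ∑ i ∈ range τ, u (k - τ + i) := by
    intro k hk
    have hdk : d k ≤ τ := le_trans (hd k) (min_le_left _ _)
    have hdk2 : d k ≤ k := by omega
    have htel : ∑ j ∈ Ico (k - d k) k, (x (j + 1) - x j) = x k - x (k - d k) := by
      rw [Finset.sum_Ico_eq_sum_range]
      have h2 := Finset.sum_range_sub (fun t => x (k - d k + t)) (k - (k - d k))
      calc ∑ i ∈ range (k - (k - d k)), (x (k - d k + i + 1) - x (k - d k + i))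
          = ∑ i ∈ range (k - (k - d k)),
            ((fun t => x (k - d k + t)) (i + 1) - (fun t => x (k - d k + t)) i) := by
            apply Finset.sum_congr rfl; intro i _; simp [Nat.add_assoc]
        _ = x (k - d k + (k - (k - d k))) - x (k - d k + 0) := h2
        _ = x k - x (k - d k) := by
            rw [Nat.sub_sub_self hdk2, Nat.add_zero, Nat.sub_add_cancel hdk2]
    calc ‖x k - x (k - d k)‖ = ‖∑ j ∈ Ico (k - d k) k, (x (j + 1) - x j)‖ := by rw [htel]
      _ ≤ ∑ j ∈ Ico (k - d k) k, u j := norm_sum_le _ _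
      _ ≤ ∑ j ∈ Ico (k - τ) k, u j := by
          apply Finset.sum_le_sum_of_subset_of_nonneg
          · exact Finset.Ico_subset_Ico (Nat.sub_le_sub_left hdk k) le_rfl
          · intro j _ _; exact hu_nonneg j
      _ = ∑ i ∈ range τ, u (k - τ + i) := by
          rw [Finset.sum_Ico_eq_sum_range, Nat.sub_sub_self (by omega : τ ≤ k)]
  -- the key one-step inequality
  have hkey : ∀ z : H, (∀ i, T i z = z) → ∀ k, τ + 1 ≤ k →
      ‖x (k + 1) - z‖ ^ 2 ≤ ‖x k - z‖ ^ 2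
        - lam k * (1 - ((τ : ℝ) + 1) * lam k) * e k ^ 2
        + ∑ i ∈ range τ, b (k - τ + i) := by
    intro z hz k hk
    rw [hupd k hk]
    have step := asi_step' (T (idx k)) (hT (idx k)) z (hz (idx k)) (x k) (x (k - d k))
      (lam k) (hlam k).1 (∑ i ∈ range τ, u (k - τ + i)) (hQ k hk)
    have hcs : 2 * (lam k * e k) * (∑ i ∈ range τ, u (k - τ + i))
        ≤ (τ : ℝ) * (lam k * e k) ^ 2 + ∑ i ∈ range τ, b (k - τ + i) := by
      rw [Finset.mul_sum]
      have h1 : ∀ i ∈ range τ, 2 * (lam k * e k) * u (k - τ + i)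
          ≤ (lam k * e k) ^ 2 + b (k - τ + i) := by
        intro i _
        exact two_mul_le_add_sq _ _
      calc ∑ i ∈ range τ, 2 * (lam k * e k) * u (k - τ + i)
          ≤ ∑ i ∈ range τ, ((lam k * e k) ^ 2 + b (k - τ + i)) := Finset.sum_le_sum h1
        _ = (τ : ℝ) * (lam k * e k) ^ 2 + ∑ i ∈ range τ, b (k - τ + i) := by
            rw [Finset.sum_add_distrib, Finset.sum_const, Finset.card_range]
            simp [nsmul_eq_mul]
    have he' : e k = ‖x (k - d k) - T (idx k) (x (k - d k))‖ := rfl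
    rw [← he'] at step
    nlinarith [step, hcs, sq_nonneg (e k), (hlam k).1]
  -- partial-sum bound
  have hsum : ∀ N, δ * (∑ k ∈ Ico (τ + 1) N, lam k * e k ^ 2)
      ≤ ‖x (τ + 1) - z₀‖ ^ 2 := by
    intro N
    rcases le_or_gt N (τ + 1) with hN | hN
    · rw [Finset.Ico_eq_empty (by omega), Finset.sum_empty, mul_zero]
      positivity
    -- telescoping
    have htel : ∑ k ∈ Ico (τ + 1) N, (‖x (k + 1) - z₀‖ ^ 2 - ‖x k - z₀‖ ^ 2)
        = ‖x N - z₀‖ ^ 2 - ‖x (τ + 1) - z₀‖ ^ 2 := by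
      rw [Finset.sum_Ico_eq_sum_range]
      have h2 := Finset.sum_range_sub (fun t => ‖x (τ + 1 + t) - z₀‖ ^ 2) (N - (τ + 1))
      calc ∑ i ∈ range (N - (τ + 1)), (‖x (τ + 1 + i + 1) - z₀‖ ^ 2 - ‖x (τ + 1 + i) - z₀‖ ^ 2)
          = ∑ i ∈ range (N - (τ + 1)), ((fun t => ‖x (τ + 1 + t) - z₀‖ ^ 2) (i + 1)
            - (fun t => ‖x (τ + 1 + t) - z₀‖ ^ 2) i) := by
            apply Finset.sum_congr rfl; intro i _; simp [Nat.add_assoc]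
        _ = ‖x (τ + 1 + (N - (τ + 1))) - z₀‖ ^ 2 - ‖x (τ + 1 + 0) - z₀‖ ^ 2 := h2
        _ = ‖x N - z₀‖ ^ 2 - ‖x (τ + 1) - z₀‖ ^ 2 := by
            rw [Nat.add_zero, Nat.add_sub_cancel' (by omega : τ + 1 ≤ N)]
    -- sum the key inequality
    have hsumineq : ∑ k ∈ Ico (τ + 1) N, (‖x (k + 1) - z₀‖ ^ 2 - ‖x k - z₀‖ ^ 2)
        ≤ ∑ k ∈ Ico (τ + 1) N, (- (lam k * (1 - ((τ : ℝ) + 1) * lam k) * e k ^ 2)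
          + ∑ i ∈ range τ, b (k - τ + i)) := by
      apply Finset.sum_le_sum
      intro k hk
      have hk' : τ + 1 ≤ k := (Finset.mem_Ico.1 hk).1
      have := hkey z₀ hz₀ k hk'
      linarith
    -- the double sum bound
    set w : ℕ → ℝ := fun j => if τ + 1 ≤ j then lb * (lam j * e j ^ 2) else 0 with hw_def
    have hw_nonneg : ∀ j, 0 ≤ w j := by
      intro j
      simp only [hw_def]
      split
      · have := (hlam j).1; positivity
      · exact le_rfl
    have hbw : ∀ j, b j ≤ w j := by
      intro j
      simp only [hw_def]
      split
      · rename_i hj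
        rw [hb_eq j hj]
        have h5 : 0 ≤ (lb - lam j) * (lam j * e j ^ 2) :=
          mul_nonneg (by linarith [hlamlb j]) (mul_nonneg (hlam j).1.le (sq_nonneg _))
        nlinarith [h5]
      · rename_i hj
        rw [hb_def]
        simp only []
        rw [hu_zero j (by omega)]
        norm_num
    have hwsum : ∀ i, i < τ → ∑ k ∈ Ico (τ + 1) N, w (k - τ + i)
        ≤ ∑ j ∈ Ico (τ + 1) N, w j := by
      intro i hi
      have h1 : ∑ k ∈ Ico (τ + 1) N, w (k - τ + i)
          = ∑ t ∈ range (N - (τ + 1)), w (1 + i + t) := by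
        rw [Finset.sum_Ico_eq_sum_range]
        apply Finset.sum_congr rfl
        intro t _
        congr 1
        omega
      have h2 : ∑ t ∈ range (N - (τ + 1)), w (1 + i + t)
          = ∑ j ∈ Ico (1 + i) (1 + i + (N - (τ + 1))), w j := by
        rw [Finset.sum_Ico_eq_sum_range]
        simp
      have h3 : ∑ j ∈ Ico (1 + i) (1 + i + (N - (τ + 1))), w j
          ≤ ∑ j ∈ range N, w j := by
        apply Finset.sum_le_sum_of_subset_of_nonneg
        · intro j hj
          rw [Finset.mem_Ico] at hj
          rw [Finset.mem_range]
          omega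
        · intro j _ _; exact hw_nonneg j
      have h4 : ∑ j ∈ range N, w j = ∑ j ∈ Ico (τ + 1) N, w j := by
        rw [Finset.range_eq_Ico]
        symm
        apply Finset.sum_subset
        · exact Finset.Ico_subset_Ico (by omega) le_rfl
        · intro j hj1 hj2
          rw [Finset.mem_Ico] at hj1 hj2
          simp only [hw_def]
          rw [if_neg (by omega)]
      rw [h1, h2]
      rw [h4] at h3
      exact h3
    have hdouble : ∑ k ∈ Ico (τ + 1) N, ∑ i ∈ range τ, b (k - τ + i)
        ≤ (τ : ℝ) * lb * ∑ k ∈ Ico (τ + 1) N, lam k * e k ^ 2 := by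
      rw [Finset.sum_comm]
      have h1 : ∀ i ∈ range τ, ∑ k ∈ Ico (τ + 1) N, b (k - τ + i)
          ≤ lb * ∑ k ∈ Ico (τ + 1) N, lam k * e k ^ 2 := by
        intro i hi
        have h2 : ∑ k ∈ Ico (τ + 1) N, b (k - τ + i)
            ≤ ∑ k ∈ Ico (τ + 1) N, w (k - τ + i) :=
          Finset.sum_le_sum (fun k _ => hbw _)
        have h3 := hwsum i (Finset.mem_range.1 hi)
        have h4 : ∑ j ∈ Ico (τ + 1) N, w j
            = lb * ∑ k ∈ Ico (τ + 1) N, lam k * e k ^ 2 := by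
          rw [Finset.mul_sum]
          apply Finset.sum_congr rfl
          intro j hj
          simp only [hw_def]
          rw [if_pos (Finset.mem_Ico.1 hj).1]
        linarith
      calc ∑ i ∈ range τ, ∑ k ∈ Ico (τ + 1) N, b (k - τ + i)
          ≤ ∑ i ∈ range τ, (lb * ∑ k ∈ Ico (τ + 1) N, lam k * e k ^ 2) :=
            Finset.sum_le_sum h1
        _ = (τ : ℝ) * lb * ∑ k ∈ Ico (τ + 1) N, lam k * e k ^ 2 := by
            rw [Finset.sum_const, Finset.card_range, nsmul_eq_mul]; ring
    -- per-term coefficient bound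
    have hcoefsum : (δ + (τ : ℝ) * lb) * ∑ k ∈ Ico (τ + 1) N, lam k * e k ^ 2
        ≤ ∑ k ∈ Ico (τ + 1) N, lam k * (1 - ((τ : ℝ) + 1) * lam k) * e k ^ 2 := by
      rw [Finset.mul_sum]
      apply Finset.sum_le_sum
      intro k _
      have h1 := hcoef k
      have h3 : (0:ℝ) ≤ lam k * e k ^ 2 := by
        have := (hlam k).1; positivity
      nlinarith [mul_le_mul_of_nonneg_right h1 h3]
    have hsplit : ∑ k ∈ Ico (τ + 1) N, (- (lam k * (1 - ((τ : ℝ) + 1) * lam k) * e k ^ 2)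
          + ∑ i ∈ range τ, b (k - τ + i))
        = - ∑ k ∈ Ico (τ + 1) N, lam k * (1 - ((τ : ℝ) + 1) * lam k) * e k ^ 2
          + ∑ k ∈ Ico (τ + 1) N, ∑ i ∈ range τ, b (k - τ + i) := by
      rw [Finset.sum_add_distrib, Finset.sum_neg_distrib]
    have hfin : 0 ≤ ‖x N - z₀‖ ^ 2 := sq_nonneg _
    rw [htel] at hsumineq
    rw [hsplit] at hsumineq
    nlinarith [hsumineq, hdouble, hcoefsum]
  -- summability
  have hP_nonneg : ∀ k, 0 ≤ lam k * e k ^ 2 := by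
    intro k; have := (hlam k).1; positivity
  have hsummable : Summable (fun k => lam k * e k ^ 2) := by
    set C0 : ℝ := ∑ k ∈ range (τ + 1), lam k * e k ^ 2 with hC0
    have hC0nn : 0 ≤ C0 := Finset.sum_nonneg (fun k _ => hP_nonneg k)
    apply summable_of_sum_range_le hP_nonneg (c := C0 + ‖x (τ + 1) - z₀‖ ^ 2 / δ)
    intro N
    rcases le_or_gt N (τ + 1) with hN | hN
    · have h1 : ∑ k ∈ range N, lam k * e k ^ 2 ≤ C0 := by
        apply Finset.sum_le_sum_of_subset_of_nonneg
        · exact Finset.range_subset_range.2 hN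
        · intro k _ _; exact hP_nonneg k
      have h2 : 0 ≤ ‖x (τ + 1) - z₀‖ ^ 2 / δ := by positivity
      linarith
    · have hsplit : ∑ k ∈ range N, lam k * e k ^ 2
          = C0 + ∑ k ∈ Ico (τ + 1) N, lam k * e k ^ 2 := by
        rw [hC0, ← Finset.sum_range_add_sum_Ico _ (by omega : τ + 1 ≤ N)]
      have h3 : ∑ k ∈ Ico (τ + 1) N, lam k * e k ^ 2 ≤ ‖x (τ + 1) - z₀‖ ^ 2 / δ := by
        rw [le_div_iff₀ hδpos]
        have := hsum N
        linarith
      linarith [hsplit, h3]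
  have he2 : Summable (fun k => e k ^ 2) := by
    refine Summable.of_nonneg_of_le (fun k => sq_nonneg (e k)) (fun k => ?_)
      (hsummable.mul_left ε⁻¹)
    have h1 : ε * e k ^ 2 ≤ lam k * e k ^ 2 :=
      mul_le_mul_of_nonneg_right (hlam2 k).1 (sq_nonneg _)
    rw [inv_mul_eq_div, le_div_iff₀ hε]
    linarith
  have hbsum : Summable b := by
    refine Summable.of_nonneg_of_le hb_nonneg (fun k => ?_) (hsummable.mul_left lb)
    rcases le_or_gt k τ with hk | hk
    · have hbz : b k = 0 := by
        simp only [hb_def, hu_zero k hk]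
        norm_num
      rw [hbz]
      have := hP_nonneg k
      nlinarith [hlbpos]
    · rw [hb_eq k (by omega)]
      have h5 : 0 ≤ (lb - lam k) * (lam k * e k ^ 2) :=
        mul_nonneg (by linarith [hlamlb k]) (mul_nonneg (hlam k).1.le (sq_nonneg _))
      nlinarith [h5]
  -- limits of the residuals
  have he0 : Tendsto e atTop (nhds 0) := by
    have h1 : Tendsto (fun k => e k ^ 2) atTop (nhds 0) := he2.tendsto_atTop_zero
    have h2 := (Real.continuous_sqrt.tendsto 0).comp h1
    simp only [Real.sqrt_zero] at h2
    have h3 : (fun k => Real.sqrt (e k ^ 2)) = e := by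
      funext k; exact Real.sqrt_sq (he_nonneg k)
    rwa [Function.comp_def, h3] at h2
  have hu0 : Tendsto u atTop (nhds 0) := by
    apply squeeze_zero' (Eventually.of_forall hu_nonneg) _ he0
    filter_upwards [eventually_ge_atTop (τ + 1)] with k hk
    rw [hu_eq k hk]
    nlinarith [(hlam k).2, he_nonneg k, (hlam k).1]
  -- the delayed difference tends to zero
  have hshift : ∀ i : ℕ, Tendsto (fun k => u (k - τ + i)) atTop (nhds 0) := by
    intro i
    apply hu0.comp
    apply tendsto_atTop_mono (fun k => (by omega : k - τ ≤ k - τ + i))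
    exact tendsto_sub_atTop_nat τ
  have hsum0 : Tendsto (fun k => ∑ i ∈ range τ, u (k - τ + i)) atTop (nhds 0) := by
    have h1 := tendsto_finset_sum (range τ) (fun i _ => hshift i)
    simpa using h1
  have hDreg : Tendsto (fun k => ‖x k - x (k - d k)‖) atTop (nhds 0) := by
    apply squeeze_zero' (Eventually.of_forall (fun k => norm_nonneg _)) _ hsum0
    filter_upwards [eventually_ge_atTop (τ + 1)] with k hk
    exact hQ k hk
  -- existence of limits of ‖x k - z‖²
  refine ⟨?_, hDreg, hu0, he0⟩
  intro z hz
  set g : ℕ → ℝ := fun k => ((τ : ℝ) + 1) * b k + ∑ i ∈ range τ, b (k - τ + i) with hg_def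
  have hg_nonneg : ∀ k, 0 ≤ g k := by
    intro k
    apply add_nonneg
    · exact mul_nonneg (by positivity) (hb_nonneg k)
    · exact Finset.sum_nonneg (fun i _ => hb_nonneg _)
  have hg_sum : Summable g := by
    apply Summable.add (hbsum.mul_left _)
    apply summable_sum
    intro i _
    have h1 : Summable (fun k => b (k + i)) := (summable_nat_add_iff i).2 hbsum
    have h2 : Summable (fun k => b (k + τ - τ + i)) := by
      simpa using h1
    exact (summable_nat_add_iff τ).1 h2
  have hrec : ∀ k, ‖x (k + 1) - z‖ ^ 2 ≤ ‖x k - z‖ ^ 2 + g k := by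
    intro k
    rcases le_or_gt k τ with hk | hk
    · rw [hstep0 k hk]
      linarith [hg_nonneg k]
    · have h1 := hkey z hz k (by omega)
      have h2 : lam k * (1 - ((τ : ℝ) + 1) * lam k) * e k ^ 2
          ≥ - (((τ : ℝ) + 1) * b k) := by
        rw [hb_eq k (by omega)]
        have h3 : 0 ≤ lam k * e k ^ 2 := hP_nonneg k
        have h4 := (hlam k).1
        nlinarith [sq_nonneg (e k)]
      simp only [hg_def]
      linarith
  set t : ℕ → ℝ := fun n => ∑' j, g (j + n) with ht_def
  have ht_nonneg : ∀ n, 0 ≤ t n :=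
    fun n => tsum_nonneg (fun j => hg_nonneg _)
  have ht_rec : ∀ n, t n = g n + t (n + 1) := by
    intro n
    have hs : Summable (fun j => g (j + n)) := (summable_nat_add_iff n).2 hg_sum
    simp only [ht_def]
    rw [hs.tsum_eq_zero_add]
    simp [add_assoc, add_comm 1 n]
  set A : ℕ → ℝ := fun n => ‖x n - z‖ ^ 2 + t n with hA_def
  have hA_anti : Antitone A := by
    apply antitone_nat_of_succ_le
    intro n
    simp only [hA_def]
    have h1 := hrec n
    have h2 := ht_rec n
    linarith
  have hA_bdd : BddBelow (Set.range A) := by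
    refine ⟨0, fun y hy => ?_⟩
    obtain ⟨n, rfl⟩ := hy
    simp only [hA_def]
    have := sq_nonneg ‖x n - z‖
    have := ht_nonneg n
    positivity
  have hAconv : Tendsto A atTop (nhds (⨅ n, A n)) := tendsto_atTop_ciInf hA_anti hA_bdd
  have ht0 : Tendsto t atTop (nhds 0) := tendsto_sum_nat_add g
  refine ⟨⨅ n, A n, ?_⟩
  have h2 := hAconv.sub ht0
  simp only [sub_zero] at h2
  have h3 : (fun n => A n - t n) = fun n => ‖x n - z‖ ^ 2 := by
    funext n; simp [hA_def]
  rwa [h3] at h2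

/-- Theorem 1 of the paper, the main convergence result. Let `x` be a
sequence generated by the ASI algorithm with delay bound `τ ≥ 0`, where the control
sequence `idx` is an almost cyclic control on `{1, ..., m}`. If there is `ε > 0` such that
`ε ≤ λ k ≤ 1/(2τ + 1 + ε)` for all `k`, then `x` converges weakly to a common fixed point
`x* ∈ C = ⋂ i, Fix (T i)`. -/
theorem asi_main_convergence
    {H : Type*} [NormedAddCommGroup H] [InnerProductSpace ℝ H] [CompleteSpace H]
    (m : ℕ) (hm : 1 ≤ m) (T : Fin m → H → H)
    (hT : ∀ i, ∀ u v : H, ‖T i u - T i v‖ ≤ ‖u - v‖)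
    (hcommon : ∃ z : H, ∀ i, T i z = z)
    (x : ℕ → H) (lam : ℕ → ℝ) (idx : ℕ → Fin m) (d : ℕ → ℕ) (τ : ℕ)
    (hlam : ∀ k, 0 < lam k ∧ lam k < 1)
    (hcyc : ∃ M : ℕ, m ≤ M ∧ ∀ k, ∀ j : Fin m,
      ∃ l, k + 1 ≤ l ∧ l ≤ k + M ∧ idx l = j)
    (hd : ∀ k, d k ≤ min τ (k - 1))
    (hx0 : x 0 = x 1)
    (hup : ∀ k, 1 ≤ k → x (k + 1) =
      if k ≤ τ then x k
      else x k - lam k • (x (k - d k) - T (idx k) (x (k - d k))))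
    (ε : ℝ) (hε : 0 < ε)
    (hlam2 : ∀ k, ε ≤ lam k ∧ lam k ≤ 1 / (2 * (τ : ℝ) + 1 + ε)) :
    ∃ xstar ∈ ⋂ i, Function.fixedPoints (T i),
      ∀ w : H, Tendsto (fun k => (inner ℝ (x k) w : ℝ)) atTop (nhds (inner ℝ xstar w)) := by
  obtain ⟨z₀, hz₀⟩ := hcommon
  obtain ⟨M, hMm, hM⟩ := hcyc
  obtain ⟨hlimz, hDreg, hu0, he0⟩ :=
    asi_estimates m T hT x lam idx d τ hlam hd hx0 hup ε hε hlam2 z₀ hz₀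
  -- boundedness of the sequence
  obtain ⟨L0, hL0⟩ := hlimz z₀ hz₀
  obtain ⟨R, hR⟩ : ∃ R : ℝ, ∀ k, ‖x k‖ ≤ R := by
    obtain ⟨C, hC⟩ := hL0.bddAbove_range
    have hC' : ∀ k, ‖x k - z₀‖ ^ 2 ≤ C := fun k => hC ⟨k, rfl⟩
    have hC0 : 0 ≤ C := le_trans (sq_nonneg _) (hC' 0)
    refine ⟨‖z₀‖ + Real.sqrt C, fun k => ?_⟩
    have h1 : ‖x k - z₀‖ ≤ Real.sqrt C :=
      (Real.le_sqrt (norm_nonneg _) hC0).2 (hC' k)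
    calc ‖x k‖ = ‖(x k - z₀) + z₀‖ := by rw [sub_add_cancel]
      _ ≤ ‖x k - z₀‖ + ‖z₀‖ := norm_add_le _ _
      _ ≤ ‖z₀‖ + Real.sqrt C := by linarith
  -- asymptotic regularity along the control sequence
  have hregidx : Tendsto (fun k => ‖x k - T (idx k) (x k)‖) atTop (nhds 0) := by
    have hb : ∀ k, ‖x k - T (idx k) (x k)‖
        ≤ ‖x (k - d k) - T (idx k) (x (k - d k))‖ + 2 * ‖x k - x (k - d k)‖ := by
      intro k
      calc ‖x k - T (idx k) (x k)‖
          ≤ ‖x k - x (k - d k)‖ + ‖x (k - d k) - T (idx k) (x k)‖ :=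
            norm_sub_le_norm_sub_add_norm_sub _ _ _
        _ ≤ ‖x k - x (k - d k)‖ + (‖x (k - d k) - T (idx k) (x (k - d k))‖
            + ‖T (idx k) (x (k - d k)) - T (idx k) (x k)‖) := by
            gcongr
            exact norm_sub_le_norm_sub_add_norm_sub _ _ _
        _ ≤ ‖x k - x (k - d k)‖ + (‖x (k - d k) - T (idx k) (x (k - d k))‖
            + ‖x (k - d k) - x k‖) := by
            gcongr
            exact hT _ _ _
        _ = ‖x (k - d k) - T (idx k) (x (k - d k))‖ + 2 * ‖x k - x (k - d k)‖ := by
            rw [norm_sub_rev (x (k - d k)) (x k)]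
            ring
    have hlim : Tendsto (fun k => ‖x (k - d k) - T (idx k) (x (k - d k))‖
        + 2 * ‖x k - x (k - d k)‖) atTop (nhds 0) := by
      have := he0.add (hDreg.const_mul 2)
      simpa using this
    exact squeeze_zero' (Eventually.of_forall (fun k => norm_nonneg _))
      (Eventually.of_forall hb) hlim
  -- asymptotic regularity for each operator
  have hreg : ∀ i, Tendsto (fun k => ‖x k - T i (x k)‖) atTop (nhds 0) := by
    intro i
    choose L hL1 hL2 hL3 using fun k => hM k i
    have hxL : ∀ k, ‖x (L k) - x k‖ ≤ ∑ j ∈ range M, ‖x (k + j + 1) - x (k + j)‖ := by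
      intro k
      have htel : ∑ j ∈ Ico k (L k), (x (j + 1) - x j) = x (L k) - x k := by
        rw [Finset.sum_Ico_eq_sum_range]
        have h2 := Finset.sum_range_sub (fun t => x (k + t)) (L k - k)
        calc ∑ j ∈ range (L k - k), (x (k + j + 1) - x (k + j))
            = ∑ j ∈ range (L k - k),
              ((fun t => x (k + t)) (j + 1) - (fun t => x (k + t)) j) := by
              apply Finset.sum_congr rfl; intro j _; simp [Nat.add_assoc]
          _ = x (k + (L k - k)) - x (k + 0) := h2
          _ = x (L k) - x k := by
              rw [Nat.add_zero, Nat.add_sub_cancel' (Nat.le_of_succ_le (hL1 k))]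
      calc ‖x (L k) - x k‖ = ‖∑ j ∈ Ico k (L k), (x (j + 1) - x j)‖ := by rw [htel]
        _ ≤ ∑ j ∈ Ico k (L k), ‖x (j + 1) - x j‖ := norm_sum_le _ _
        _ ≤ ∑ j ∈ Ico k (k + M), ‖x (j + 1) - x j‖ := by
            apply Finset.sum_le_sum_of_subset_of_nonneg
            · exact Finset.Ico_subset_Ico le_rfl (hL2 k)
            · intro j _ _; exact norm_nonneg _
        _ = ∑ j ∈ range M, ‖x (k + j + 1) - x (k + j)‖ := by
            rw [Finset.sum_Ico_eq_sum_range]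
            simp
    have hkey2 : ∀ k, ‖x k - T i (x k)‖
        ≤ 2 * (∑ j ∈ range M, ‖x (k + j + 1) - x (k + j)‖)
          + ‖x (L k) - T (idx (L k)) (x (L k))‖ := by
      intro k
      rw [hL3 k]
      calc ‖x k - T i (x k)‖
          ≤ ‖x k - x (L k)‖ + ‖x (L k) - T i (x k)‖ :=
            norm_sub_le_norm_sub_add_norm_sub _ _ _
        _ ≤ ‖x k - x (L k)‖ + (‖x (L k) - T i (x (L k))‖
            + ‖T i (x (L k)) - T i (x k)‖) := by
            gcongr
            exact norm_sub_le_norm_sub_add_norm_sub _ _ _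
        _ ≤ ‖x k - x (L k)‖ + (‖x (L k) - T i (x (L k))‖ + ‖x (L k) - x k‖) := by
            gcongr
            exact hT _ _ _
        _ ≤ 2 * (∑ j ∈ range M, ‖x (k + j + 1) - x (k + j)‖)
            + ‖x (L k) - T i (x (L k))‖ := by
            rw [norm_sub_rev (x k) (x (L k))]
            have := hxL k
            linarith
    have hLtop : Tendsto L atTop atTop :=
      tendsto_atTop_mono (fun k => le_of_lt (hL1 k)) tendsto_id
    have hmid : Tendsto (fun k => ‖x (L k) - T (idx (L k)) (x (L k))‖) atTop (nhds 0) :=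
      hregidx.comp hLtop
    have hsumu : Tendsto (fun k => ∑ j ∈ range M, ‖x (k + j + 1) - x (k + j)‖)
        atTop (nhds 0) := by
      have h1 : ∀ j : ℕ, Tendsto (fun k => ‖x (k + j + 1) - x (k + j)‖) atTop (nhds 0) := by
        intro j
        exact hu0.comp (tendsto_atTop_mono (fun k => Nat.le_add_right k j) tendsto_id)
      have h2 := tendsto_finset_sum (range M) (fun j _ => h1 j)
      simpa using h2
    have hlim : Tendsto (fun k => 2 * (∑ j ∈ range M, ‖x (k + j + 1) - x (k + j)‖)
        + ‖x (L k) - T (idx (L k)) (x (L k))‖) atTop (nhds 0) := by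
      have := (hsumu.const_mul 2).add hmid
      simpa using this
    exact squeeze_zero' (Eventually.of_forall (fun k => norm_nonneg _))
      (Eventually.of_forall hkey2) hlim
  -- weak cluster point
  obtain ⟨p, φ, hφ, hwp⟩ := weak_seq_compact x R hR
  have hpfix : ∀ i, T i p = p := by
    intro i
    exact demiclosed (T i) (hT i) (fun k => x (φ k)) R (fun k => hR _)
      ((hreg i).comp hφ.tendsto_atTop) p hwp
  -- Opial-type uniqueness of weak cluster points
  have huniq : ∀ (q : H), (∀ i, T i q = q) →
      ∀ (ns : ℕ → ℕ), Tendsto ns atTop atTop →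
      (∀ w : H, Tendsto (fun n => (inner ℝ (x (ns n)) w : ℝ)) atTop (nhds (inner ℝ q w))) →
      q = p := by
    intro q hq ns hns hwq
    obtain ⟨Lp, hLp⟩ := hlimz p hpfix
    obtain ⟨Lq, hLq⟩ := hlimz q hq
    have hdiff : ∀ k, (inner ℝ (x k) (p - q) : ℝ)
        = (‖p‖ ^ 2 - ‖q‖ ^ 2 - (‖x k - p‖ ^ 2 - ‖x k - q‖ ^ 2)) / 2 := by
      intro k
      have h1 := norm_sub_sq_real (x k) p
      have h2 := norm_sub_sq_real (x k) q
      have h3 : (inner ℝ (x k) (p - q) : ℝ) = inner ℝ (x k) p - inner ℝ (x k) q :=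
        inner_sub_right _ _ _
      rw [h3]; linarith
    have hconv : Tendsto (fun k => (inner ℝ (x k) (p - q) : ℝ)) atTop
        (nhds ((‖p‖ ^ 2 - ‖q‖ ^ 2 - (Lp - Lq)) / 2)) := by
      have h1 := ((tendsto_const_nhds (x := ‖p‖ ^ 2 - ‖q‖ ^ 2)).sub (hLp.sub hLq)).div_const 2
      exact h1.congr (fun k => (hdiff k).symm)
    have cp : (inner ℝ p (p - q) : ℝ) = (‖p‖ ^ 2 - ‖q‖ ^ 2 - (Lp - Lq)) / 2 :=
      tendsto_nhds_unique (hwp (p - q)) (hconv.comp hφ.tendsto_atTop)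
    have cq : (inner ℝ q (p - q) : ℝ) = (‖p‖ ^ 2 - ‖q‖ ^ 2 - (Lp - Lq)) / 2 :=
      tendsto_nhds_unique (hwq (p - q)) (hconv.comp hns)
    have h0 : (inner ℝ (p - q) (p - q) : ℝ) = 0 := by
      rw [inner_sub_left, cp, cq]; ring
    have h1 : p - q = 0 := inner_self_eq_zero.1 h0
    have h2 : p = q := by rwa [sub_eq_zero] at h1
    exact h2.symm
  refine ⟨p, ?_, ?_⟩
  · rw [Set.mem_iInter]
    intro i
    exact hpfix i
  · intro w
    apply Filter.tendsto_of_subseq_tendsto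
    intro ns hns
    obtain ⟨q, ψ, hψ, hwq⟩ := weak_seq_compact (fun n => x (ns n)) R (fun n => hR _)
    have hnsψ : Tendsto (fun n => ns (ψ n)) atTop atTop := hns.comp hψ.tendsto_atTop
    have hqfix : ∀ i, T i q = q := by
      intro i
      exact demiclosed (T i) (hT i) (fun n => x (ns (ψ n))) R (fun n => hR _)
        ((hreg i).comp hnsψ) q hwq
    have hqp : q = p := huniq q hqfix (fun n => ns (ψ n)) hnsψ hwq
    exact ⟨ψ, hqp ▸ hwq w⟩
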